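/- For the centroid G of triangle ABC with sides a = BC, b = CA, c = AB, the parallels through G to the sides divide each side into segments so that the distances from G to the sides of angle A, measured as coefficients along unit vectors from A, are x = c/3 and y = b/3; consequently the W-line relative to A cuts off perimeter length (√(c/3) + √(b/3))² = (b + c + 2√(bc))/3 from angle A. -/

import Mathlib

/-- The centroid `G` of triangle `ABC` satisfies `G = A + (c/3)•u + (b/3)•v` for
unit vectors `u, v` along `AB, AC`, and the W-line relative to `A` cuts off
perimeter `(√(c/3) + √(b/3))² = (b + c + 2√(bc))/3`, which is the minimal value
of `s + t` over lines through `G` crossing the sides of the angle at `A`. -/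
theorem centroid_wline (A B C : EuclideanSpace ℝ (Fin 2)) (a b c : ℝ)
    (ha : dist B C = a) (hb : dist C A = b) (hc : dist A B = c)
    (hA : 0 < a) (hB : 0 < b) (hC : 0 < c)
    (G : EuclideanSpace ℝ (Fin 2)) (hG : G = (3 : ℝ)⁻¹ • (A + B + C)) :
    G = A + (c / 3) • (c⁻¹ • (B - A)) + (b / 3) • (b⁻¹ • (C - A)) ∧
    (Real.sqrt (c / 3) + Real.sqrt (b / 3)) ^ 2
      = (b + c + 2 * Real.sqrt (b * c)) / 3 ∧
    ∀ s t : ℝ, 0 < s → 0 < t → (c / 3) / s + (b / 3) / t = 1 →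
      (b + c + 2 * Real.sqrt (b * c)) / 3 ≤ s + t := by
  have hb3 : (0:ℝ) < b / 3 := by linarith
  have hc3 : (0:ℝ) < c / 3 := by linarith
  have hsq : Real.sqrt (b*c) ^ 2 = b*c := Real.sq_sqrt (mul_nonneg hB.le hC.le)
  have hbc9 : Real.sqrt (b*c/9) = Real.sqrt (b*c) / 3 := by
    rw [show b*c/9 = (Real.sqrt (b*c)/3)^2 by rw [div_pow, hsq]; norm_num]
    exact Real.sqrt_sq (by positivity)
  refine ⟨?_, ?_, ?_⟩
  · rw [hG, smul_smul, smul_smul]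
    rw [show c / 3 * c⁻¹ = (3:ℝ)⁻¹ by field_simp,
        show b / 3 * b⁻¹ = (3:ℝ)⁻¹ by field_simp]
    module
  · have h1 : Real.sqrt (c/3) ^ 2 = c/3 := Real.sq_sqrt hc3.le
    have h2 : Real.sqrt (b/3) ^ 2 = b/3 := Real.sq_sqrt hb3.le
    have h3 : Real.sqrt (c/3) * Real.sqrt (b/3) = Real.sqrt (b*c) / 3 := by
      rw [← Real.sqrt_mul hc3.le, show c/3 * (b/3) = b*c/9 by ring, hbc9]
    nlinarith [h1, h2, h3]
  · intro s t hs ht hst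
    have hxs : c/3 < s := by
      have h1 : (c/3)/s < 1 := by
        have : (0:ℝ) < (b/3)/t := by positivity
        linarith
      rwa [div_lt_one hs] at h1
    have hyt : b/3 < t := by
      have h1 : (b/3)/t < 1 := by
        have : (0:ℝ) < (c/3)/s := by positivity
        linarith
      rwa [div_lt_one ht] at h1
    have hprod : (s - c/3) * (t - b/3) = b*c/9 := by
      field_simp at hst
      nlinarith [hst]
    have hkey : Real.sqrt ((s - c/3) * (t - b/3)) = Real.sqrt (b*c) / 3 := by
      rw [hprod, hbc9]
    have hAM : 2 * Real.sqrt ((s - c/3) * (t - b/3)) ≤ (s - c/3) + (t - b/3) := by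
      nlinarith [sq_nonneg (Real.sqrt (s - c/3) - Real.sqrt (t - b/3)),
        Real.sq_sqrt (by linarith : (0:ℝ) ≤ s - c/3),
        Real.sq_sqrt (by linarith : (0:ℝ) ≤ t - b/3),
        Real.sqrt_mul (by linarith : (0:ℝ) ≤ s - c/3) (t - b/3)]
    rw [hkey] at hAM
    linarith
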